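/- arXiv:2006.03336 — 6 statements merged into one kernel-verified Lean document; each statement's English description precedes it below -/
import Mathlib

section
/- For a real parameter g with |g| ≤ 1, the integral ∫₀^{2π} (1 - g·cos θ)·log(1 - g·cos θ) dθ/(2π) equals 1 - √(1 - g²) + log((1 + √(1 - g²))/2). -/
set_option maxHeartbeats 1000000

open Real MeasureTheory intervalIntegral

lemma gw_hasSum (z θ : ℝ) (hz : |z| < 1) :
    HasSum (fun n : ℕ => 2 * (z ^ n * Real.cos (n * θ) / n))
      (-Real.log (1 - 2 * z * Real.cos θ + z ^ 2)) := by
  set w : ℂ := (z : ℂ) * Complex.exp (θ * Complex.I) with hw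
  have hwn : ‖w‖ < 1 := by
    rw [hw]
    simpa [Complex.norm_mul, Complex.norm_real,
      Complex.norm_exp_ofReal_mul_I] using hz
  have h1 := Complex.hasSum_re (Complex.hasSum_taylorSeries_neg_log hwn)
  have hre : ∀ n : ℕ, (w ^ n / (n : ℂ)).re = z ^ n * Real.cos (n * θ) / n := by
    intro n
    have hwp : w ^ n = ((z ^ n : ℝ) : ℂ) * Complex.exp (((n * θ : ℝ) : ℂ) * Complex.I) := by
      rw [hw, mul_pow, ← Complex.exp_nat_mul]
      congr 1
      · push_cast; ring
      · congr 1; push_cast; ring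
    rw [show ((n : ℂ)) = ((n : ℝ) : ℂ) by push_cast; ring, Complex.div_ofReal_re, hwp,
      Complex.re_ofReal_mul, Complex.exp_ofReal_mul_I_re]
  have habs : (-Complex.log (1 - w)).re = -(Real.log (1 - 2 * z * Real.cos θ + z ^ 2)) / 2 := by
    have hre1 : (1 - w).re = 1 - z * Real.cos θ := by
      rw [hw]
      simp [Complex.re_ofReal_mul, Complex.exp_ofReal_mul_I_re]
    have him1 : (1 - w).im = -(z * Real.sin θ) := by
      rw [hw]
      simp [Complex.im_ofReal_mul, Complex.exp_ofReal_mul_I_im]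
    have hQ : ‖1 - w‖ = Real.sqrt (1 - 2 * z * Real.cos θ + z ^ 2) := by
      rw [Complex.norm_def, Complex.normSq_apply, hre1, him1]
      congr 1
      linear_combination (z ^ 2) * (Real.sin_sq_add_cos_sq θ)
    have hQnn : (0:ℝ) ≤ 1 - 2 * z * Real.cos θ + z ^ 2 := by
      nlinarith [sq_nonneg (1 - z * Real.cos θ), sq_nonneg (z * Real.sin θ),
        Real.sin_sq_add_cos_sq θ]
    rw [Complex.neg_re, Complex.log_re, hQ, Real.log_sqrt hQnn]
    ring
  have h2 : HasSum (fun n : ℕ => z ^ n * Real.cos (n * θ) / n)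
      (-(Real.log (1 - 2 * z * Real.cos θ + z ^ 2)) / 2) := by
    rw [← habs]
    exact h1.congr_fun fun n => (hre n).symm
  have h3 := h2.mul_left 2
  convert h3 using 1
  · rfl
  · ring

lemma gw_orthA (n : ℕ) (hn : n ≠ 0) : ∫ θ in (0:ℝ)..(2*π), Real.cos (n * θ) = 0 := by
  have hc : (n:ℝ) ≠ 0 := Nat.cast_ne_zero.mpr hn
  rw [intervalIntegral.integral_comp_mul_left (fun x => Real.cos x) hc]
  simp [integral_cos]
  rw [show (n:ℝ) * (2*π) = (2*n : ℕ) * π by push_cast; ring, Real.sin_nat_mul_pi]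
  simp

lemma gw_orthB (n : ℕ) :
    ∫ θ in (0:ℝ)..(2*π), Real.cos θ * Real.cos (n * θ) = if n = 1 then π else 0 := by
  rcases eq_or_ne n 1 with h | h
  · subst h
    simp only [Nat.cast_one, one_mul, if_true, ← sq]
    rw [integral_cos_sq]
    simp [Real.sin_two_pi, Real.cos_two_pi]
  rcases eq_or_ne n 0 with h0 | h0
  · subst h0
    simp [integral_cos]
  · -- n ≥ 2
    have h2 : 2 ≤ n := by omega
    have key : ∀ θ : ℝ, Real.cos θ * Real.cos (n * θ)
        = (Real.cos ((n+1) * θ) + Real.cos ((n-1 : ℕ) * θ)) / 2 := by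
      intro θ
      have hc : ((n - 1 : ℕ) : ℝ) = (n : ℝ) - 1 := by
        push_cast [Nat.cast_sub (by omega : 1 ≤ n)]; ring
      rw [hc]
      have e1 : ((n:ℝ)+1) * θ = (n*θ) + θ := by ring
      have e2 : ((n:ℝ)-1) * θ = (n*θ) - θ := by ring
      rw [e1, e2, Real.cos_add, Real.cos_sub]
      ring
    simp only [key, h]
    rw [intervalIntegral.integral_div]
    rw [intervalIntegral.integral_add
      ((by continuity : Continuous fun θ : ℝ => Real.cos (((n:ℝ)+1) * θ)).intervalIntegrable _ _)
      ((by continuity : Continuous fun θ : ℝ => Real.cos (((n-1:ℕ):ℝ) * θ)).intervalIntegrable _ _)]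
    have hA1 := gw_orthA (n+1) (by omega)
    have hA2 := gw_orthA (n-1) (by omega)
    push_cast at hA1
    rw [hA1, hA2]
    simp

lemma gw_orthC (g : ℝ) : ∫ θ in (0:ℝ)..(2*π), (1 : ℝ) - g * Real.cos θ = 2 * π := by
  rw [intervalIntegral.integral_sub intervalIntegrable_const
    ((Real.continuous_cos.intervalIntegrable _ _).const_mul g)]
  simp [integral_cos]

lemma gw_key (g z : ℝ) (hz : |z| < 1) :
    ∫ θ in (0:ℝ)..(2*π), (1 - g * Real.cos θ) * Real.log (1 - 2 * z * Real.cos θ + z ^ 2)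
      = 2 * π * g * z := by
  have h02 : (0:ℝ) ≤ 2 * π := by positivity
  set μ : Measure ℝ := volume.restrict (Set.Ioc 0 (2*π)) with hμ
  set F : ℕ → ℝ → ℝ := fun n θ => (1 - g * Real.cos θ) * (2 * (z ^ n * Real.cos (n * θ) / n))
    with hF
  have hFcont : ∀ n, Continuous (F n) := by
    intro n
    apply Continuous.mul (by continuity) (by continuity)
  have hF_int : ∀ n, Integrable (F n) μ := fun n => (hFcont n).integrableOn_Ioc
  have hμval : (μ Set.univ).toReal = 2 * π := by
    rw [hμ, Measure.restrict_apply_univ, Real.volume_Ioc, sub_zero, ENNReal.toReal_ofReal h02]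
  have hbound : ∀ n θ, ‖F n θ‖ ≤ (1 + |g|) * (2 * |z| ^ n) := by
    intro n θ
    rcases eq_or_ne n 0 with rfl | h0
    · simp only [hF, Nat.cast_zero, div_zero, mul_zero, norm_zero]
      positivity
    · have h1 : |1 - g * Real.cos θ| ≤ 1 + |g| := by
        have h := Real.abs_cos_le_one θ
        have h' := abs_nonneg g
        calc |1 - g * Real.cos θ| ≤ |1| + |g * Real.cos θ| := abs_sub _ _
          _ ≤ 1 + |g| := by
              rw [abs_one, abs_mul]
              nlinarith
      have hn1 : (1:ℝ) ≤ |(n:ℝ)| := by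
        rw [Nat.abs_cast]; exact_mod_cast Nat.one_le_iff_ne_zero.mpr h0
      have h2 : |2 * (z ^ n * Real.cos (n * θ) / n)| ≤ 2 * |z| ^ n := by
        rw [abs_mul, abs_of_nonneg (by norm_num : (0:ℝ) ≤ 2), abs_div, abs_mul, abs_pow]
        have hcc := Real.abs_cos_le_one ((n:ℝ) * θ)
        calc 2 * (|z| ^ n * |Real.cos (n * θ)| / |(n:ℝ)|)
            ≤ 2 * (|z| ^ n * 1 / 1) := by
              gcongr
              all_goals first
                | exact pow_nonneg (abs_nonneg z) n
                | linarith
          _ = 2 * |z| ^ n := by ring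
      rw [hF, Real.norm_eq_abs, abs_mul]
      exact mul_le_mul h1 h2 (abs_nonneg _) (by positivity)
  have hF_sum : Summable fun n => ∫ θ, ‖F n θ‖ ∂μ := by
    apply Summable.of_nonneg_of_le
      (fun n => integral_nonneg fun θ => norm_nonneg _)
      (fun n => ?_)
      (((summable_geometric_of_lt_one (abs_nonneg z) hz).mul_left
        ((1 + |g|) * 2)).mul_left (2 * π))
    calc (∫ θ, ‖F n θ‖ ∂μ) ≤ ∫ _θ, (1 + |g|) * (2 * |z| ^ n) ∂μ := by
          apply integral_mono ((hF_int n).norm) (integrable_const _)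
          exact fun θ => hbound n θ
      _ = 2 * π * ((1 + |g|) * 2 * |z| ^ n) := by
          rw [MeasureTheory.integral_const, smul_eq_mul, measureReal_def, hμval]; ring
  have hsum := MeasureTheory.hasSum_integral_of_summable_integral_norm hF_int hF_sum
  -- value of each integral
  have hFval : ∀ n : ℕ, (∫ θ, F n θ ∂μ) = (if n = 1 then -(2*π*g*z) else 0) := by
    intro n
    have hconv : (∫ θ, F n θ ∂μ) = ∫ θ in (0:ℝ)..(2*π), F n θ :=
      (intervalIntegral.integral_of_le h02).symm
    rcases eq_or_ne n 0 with rfl | h0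
    · simp only [hF, Nat.cast_zero, div_zero, mul_zero, MeasureTheory.integral_zero]
      norm_num
    · rw [hconv]
      have hrw : ∀ θ : ℝ, F n θ
          = (2 * z ^ n / n) * (Real.cos (n * θ) - g * (Real.cos θ * Real.cos (n * θ))) := by
        intro θ; rw [hF]; ring
      have hc1 : IntervalIntegrable (fun θ : ℝ => Real.cos ((n:ℝ) * θ)) volume 0 (2*π) :=
        (Real.continuous_cos.comp (continuous_const.mul continuous_id)).intervalIntegrable _ _
      have hc2 : IntervalIntegrable (fun θ : ℝ => Real.cos θ * Real.cos ((n:ℝ) * θ)) volume 0 (2*π) :=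
        (Real.continuous_cos.mul
          (Real.continuous_cos.comp (continuous_const.mul continuous_id))).intervalIntegrable _ _
      simp_rw [hrw]
      rw [intervalIntegral.integral_const_mul,
        intervalIntegral.integral_sub hc1 (hc2.const_mul g),
        gw_orthA n h0, intervalIntegral.integral_const_mul, gw_orthB n]
      rcases eq_or_ne n 1 with rfl | h1
      · norm_num; ring
      · simp [h1]
  -- tsum value
  have htsum : ∀ θ : ℝ, (∑' n, F n θ)
      = (1 - g * Real.cos θ) * (-Real.log (1 - 2 * z * Real.cos θ + z ^ 2)) := by
    intro θ
    exact ((gw_hasSum z θ hz).mul_left (1 - g * Real.cos θ)).tsum_eq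
  have hS : HasSum (fun n => ∫ θ, F n θ ∂μ) (-(2*π*g*z)) := by
    rw [funext hFval]
    exact hasSum_ite_eq 1 _
  have heq := hS.unique hsum
  have : (∫ θ, (1 - g * Real.cos θ) * (-Real.log (1 - 2 * z * Real.cos θ + z ^ 2)) ∂μ)
      = -(2*π*g*z) := by
    rw [heq]
    exact integral_congr_ae (Filter.Eventually.of_forall fun θ => (htsum θ).symm)
  have hneg : (∫ θ, (1 - g * Real.cos θ) * (-Real.log (1 - 2 * z * Real.cos θ + z ^ 2)) ∂μ)
      = -∫ θ, (1 - g * Real.cos θ) * Real.log (1 - 2 * z * Real.cos θ + z ^ 2) ∂μ := by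
    rw [← MeasureTheory.integral_neg]
    congr 1; funext θ; ring
  rw [intervalIntegral.integral_of_le h02]
  rw [hneg] at this
  linarith [this]

lemma gw_interior (g : ℝ) (hg : |g| < 1) :
    (∫ θ in (0:ℝ)..(2 * π), (1 - g * Real.cos θ) * Real.log (1 - g * Real.cos θ)) / (2 * π)
      = 1 - Real.sqrt (1 - g ^ 2) + Real.log ((1 + Real.sqrt (1 - g ^ 2)) / 2) := by
  have hg2 : g ^ 2 < 1 := by nlinarith [abs_nonneg g, sq_abs g, hg]
  set s : ℝ := Real.sqrt (1 - g ^ 2) with hsdef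
  have hs2 : s ^ 2 = 1 - g ^ 2 := Real.sq_sqrt (by linarith)
  have hs0 : 0 < s := Real.sqrt_pos.mpr (by linarith)
  have h1s : (0:ℝ) < 1 + s := by linarith
  set z : ℝ := g / (1 + s) with hzdef
  have hz : |z| < 1 := by
    rw [hzdef, abs_div, abs_of_pos h1s, div_lt_one h1s]
    linarith [hg]
  have h1z : 1 + z ^ 2 = 2 / (1 + s) := by
    rw [hzdef, div_pow]
    field_simp
    nlinarith [hs2]
  have hQg : ∀ θ : ℝ, 1 - 2 * z * Real.cos θ + z ^ 2
      = (1 - g * Real.cos θ) * (1 + z ^ 2) := by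
    intro θ
    rw [h1z, hzdef]
    field_simp
    nlinarith [hs2, Real.cos_le_one θ, Real.neg_one_le_cos θ, sq_nonneg (Real.cos θ)]
  have hgpos : ∀ θ : ℝ, 0 < 1 - g * Real.cos θ := by
    intro θ
    have h1 : g * Real.cos θ ≤ |g| := by
      calc g * Real.cos θ ≤ |g * Real.cos θ| := le_abs_self _
        _ = |g| * |Real.cos θ| := abs_mul _ _
        _ ≤ |g| * 1 := by
            have := Real.abs_cos_le_one θ
            nlinarith [abs_nonneg g]
        _ = |g| := mul_one _
    linarith
  have h1zpos : (0:ℝ) < 1 + z ^ 2 := by positivity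
  have hQpos : ∀ θ : ℝ, 0 < 1 - 2 * z * Real.cos θ + z ^ 2 := by
    intro θ
    rw [hQg θ]
    exact mul_pos (hgpos θ) h1zpos
  have hlog : ∀ θ : ℝ, Real.log (1 - g * Real.cos θ)
      = Real.log (1 - 2 * z * Real.cos θ + z ^ 2) - Real.log (1 + z ^ 2) := by
    intro θ
    rw [hQg θ, Real.log_mul (hgpos θ).ne' h1zpos.ne']
    ring
  have hsplit : ∀ θ : ℝ, (1 - g * Real.cos θ) * Real.log (1 - g * Real.cos θ)
      = (1 - g * Real.cos θ) * Real.log (1 - 2 * z * Real.cos θ + z ^ 2)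
        - Real.log (1 + z ^ 2) * (1 - g * Real.cos θ) := by
    intro θ; rw [hlog θ]; ring
  have hcont1 : Continuous fun θ : ℝ =>
      (1 - g * Real.cos θ) * Real.log (1 - 2 * z * Real.cos θ + z ^ 2) := by
    apply Continuous.mul (by continuity)
    exact Continuous.log (by continuity) fun θ => (hQpos θ).ne'
  have hcont2 : Continuous fun θ : ℝ => Real.log (1 + z ^ 2) * (1 - g * Real.cos θ) := by
    continuity
  have hint : (∫ θ in (0:ℝ)..(2 * π), (1 - g * Real.cos θ) * Real.log (1 - g * Real.cos θ))
      = 2 * π * g * z - Real.log (1 + z ^ 2) * (2 * π) := by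
    rw [intervalIntegral.integral_congr (fun θ _ => hsplit θ),
      intervalIntegral.integral_sub (hcont1.intervalIntegrable _ _)
        (hcont2.intervalIntegrable _ _),
      gw_key g z hz]
    rw [intervalIntegral.integral_const_mul, gw_orthC g]
  rw [hint]
  have hgz : g * z = 1 - s := by
    rw [hzdef]
    field_simp
    nlinarith [hs2]
  have hlogz : Real.log (1 + z ^ 2) = -Real.log ((1 + s) / 2) := by
    rw [h1z, Real.log_div two_ne_zero h1s.ne', Real.log_div h1s.ne' two_ne_zero]
    ring
  have hpi : (2 * π) ≠ 0 := by positivity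
  rw [hlogz]
  have hrw : (2*π*g*z - -Real.log ((1+s)/2) * (2*π))/(2*π) = g*z + Real.log ((1+s)/2) := by
    field_simp
    ring
  rw [hrw, hgz]

/-- For `|g| ≤ 1`, the entropy integral
`∫₀^{2π} (1 - g cos θ) log(1 - g cos θ) dθ/(2π) = 1 - √(1-g²) + log((1+√(1-g²))/2)`. -/
theorem gross_witten_entropy (g : ℝ) (hg : |g| ≤ 1) :
    (∫ θ in (0:ℝ)..(2 * π), (1 - g * Real.cos θ) * Real.log (1 - g * Real.cos θ)) / (2 * π)
      = 1 - Real.sqrt (1 - g ^ 2) + Real.log ((1 + Real.sqrt (1 - g ^ 2)) / 2) := by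
  set L : ℝ → ℝ := fun g =>
    (∫ θ in (0:ℝ)..(2 * π), (1 - g * Real.cos θ) * Real.log (1 - g * Real.cos θ)) / (2 * π)
    with hL
  set R : ℝ → ℝ := fun g =>
    1 - Real.sqrt (1 - g ^ 2) + Real.log ((1 + Real.sqrt (1 - g ^ 2)) / 2) with hR
  have hLc : Continuous L := by
    apply Continuous.div_const
    apply intervalIntegral.continuous_parametric_intervalIntegral_of_continuous'
    have h1 : Continuous fun p : ℝ × ℝ => 1 - p.1 * Real.cos p.2 :=
      continuous_const.sub (continuous_fst.mul (Real.continuous_cos.comp continuous_snd))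
    exact Real.continuous_mul_log.comp h1
  have hRc : Continuous R := by
    have hsq : Continuous fun g : ℝ => Real.sqrt (1 - g ^ 2) := by continuity
    apply Continuous.add
    · exact continuous_const.sub hsq
    · apply Continuous.log
      · continuity
      · intro x
        have := Real.sqrt_nonneg (1 - x ^ 2)
        positivity
  have heq : Set.EqOn L R (Set.Ioo (-1 : ℝ) 1) := fun x hx =>
    gw_interior x (abs_lt.mpr ⟨hx.1, hx.2⟩)
  have hcl := heq.closure hLc hRc
  rw [closure_Ioo (by norm_num : (-1:ℝ) ≠ 1)] at hcl
  have hgm := abs_le.mp hg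
  exact hcl ⟨hgm.1, hgm.2⟩
end

section
/- The integral ∫₀^{2π} (1 - cos θ)·log(1 - cos θ) dθ/(2π) equals 1 - log 2. -/
open Real MeasureTheory intervalIntegral Set

lemma aux_int_g : IntervalIntegrable (fun θ : ℝ => Real.log (1 - Real.cos θ)) volume 0 π := by
  have hmeas : AEStronglyMeasurable (fun θ : ℝ => Real.log (1 - Real.cos θ))
      (volume.restrict (Set.uIoc (0:ℝ) π)) :=
    (Real.measurable_log.comp ((measurable_const.sub Real.measurable_cos))).aestronglyMeasurable
  have hG : IntervalIntegrable
      (fun θ : ℝ => (Real.log 2 + 4 * Real.log π) + 4 * θ ^ (-(1/2) : ℝ)) volume 0 π :=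
    intervalIntegrable_const.add ((intervalIntegrable_rpow' (by norm_num)).const_mul 4)
  refine hG.mono_fun' hmeas ?_
  have hIoc : Set.uIoc (0:ℝ) π = Set.Ioc 0 π := Set.uIoc_of_le Real.pi_pos.le
  rw [hIoc, Filter.EventuallyLE, ae_restrict_iff' measurableSet_Ioc]
  refine Filter.Eventually.of_forall fun θ hθ => ?_
  obtain ⟨hθ0, hθπ⟩ := hθ
  have hπ1 : (1:ℝ) ≤ π := by linarith [Real.pi_gt_three]
  have hlogπ : 0 ≤ Real.log π := Real.log_nonneg hπ1
  have hrp : 0 < θ ^ (-(1/2) : ℝ) := Real.rpow_pos_of_pos hθ0 _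
  -- -log θ ≤ 2 * θ^(-1/2)
  have hneg : -Real.log θ ≤ 2 * θ ^ (-(1/2) : ℝ) := by
    have h1 : Real.log (θ ^ (-(1/2) : ℝ)) = -(1/2) * Real.log θ := Real.log_rpow hθ0 _
    have h2 : Real.log (θ ^ (-(1/2) : ℝ)) ≤ θ ^ (-(1/2) : ℝ) - 1 :=
      Real.log_le_sub_one_of_pos hrp
    linarith
  -- half angle
  have hs2 : 1 - Real.cos θ = 2 * Real.sin (θ/2) ^ 2 := by
    have h := Real.cos_two_mul (θ/2)
    have h2 : Real.sin (θ/2) ^ 2 + Real.cos (θ/2) ^ 2 = 1 := Real.sin_sq_add_cos_sq _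
    have h3 : (2:ℝ) * (θ/2) = θ := by ring
    rw [h3] at h
    nlinarith
  -- Jordan: sin (θ/2) ≥ θ/π
  have hj : θ / π ≤ Real.sin (θ/2) := by
    have h := Real.mul_le_sin (x := θ/2) (by linarith) (by linarith)
    calc θ / π = 2 / π * (θ/2) := by ring
      _ ≤ _ := h
  have hθπ' : 0 < θ / π := div_pos hθ0 Real.pi_pos
  have hlow : 2 * (θ/π)^2 ≤ 1 - Real.cos θ := by nlinarith
  have hup : 1 - Real.cos θ ≤ 2 := by nlinarith [Real.neg_one_le_cos θ]
  have hpos : (0:ℝ) < 2 * (θ/π)^2 := by positivity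
  have hloglow : Real.log 2 + 2 * (Real.log θ - Real.log π) ≤ Real.log (1 - Real.cos θ) := by
    have := Real.log_le_log hpos hlow
    rw [Real.log_mul two_ne_zero (by positivity), Real.log_pow,
      Real.log_div hθ0.ne' Real.pi_pos.ne'] at this
    push_cast at this
    linarith
  have hlogup : Real.log (1 - Real.cos θ) ≤ Real.log 2 := by
    have h01 : 0 < 1 - Real.cos θ := lt_of_lt_of_le hpos hlow
    exact Real.log_le_log h01 hup
  have hlogθup : Real.log θ ≤ Real.log π := Real.log_le_log hθ0 hθπ
  have hlog2 : 0 ≤ Real.log 2 := Real.log_nonneg one_le_two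
  simp only [Real.norm_eq_abs]
  rw [abs_le]
  constructor <;> linarith


lemma aux_half (θ : ℝ) : 1 - Real.cos θ = 2 * Real.sin (θ/2) ^ 2 := by
  have h := Real.cos_two_mul (θ/2)
  have h2 : Real.sin (θ/2) ^ 2 + Real.cos (θ/2) ^ 2 = 1 := Real.sin_sq_add_cos_sq _
  have h3 : (2:ℝ) * (θ/2) = θ := by ring
  rw [h3] at h
  nlinarith

lemma aux_half' (θ : ℝ) : 1 + Real.cos θ = 2 * Real.cos (θ/2) ^ 2 := by
  have h := Real.cos_two_mul (θ/2)
  have h3 : (2:ℝ) * (θ/2) = θ := by ring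
  rw [h3] at h
  nlinarith

lemma aux_key {θ : ℝ} (h1 : 0 < θ) (h2 : θ < 2 * π) :
    Real.log (1 - Real.cos θ) = Real.log 2 + 2 * Real.log (Real.sin (θ/2)) := by
  have hs : 0 < Real.sin (θ/2) :=
    Real.sin_pos_of_pos_of_lt_pi (by linarith) (by linarith)
  rw [aux_half θ, Real.log_mul two_ne_zero (by positivity), Real.log_pow]
  push_cast
  ring

-- integrability of log (1 + cos) on [0, π]
lemma aux_int_h : IntervalIntegrable (fun θ : ℝ => Real.log (1 + Real.cos θ)) volume 0 π := by
  have h := aux_int_g.comp_sub_left π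
  simp only [Real.cos_pi_sub, sub_self, sub_zero] at h
  have : (fun x : ℝ => Real.log (1 - -Real.cos x)) = fun x => Real.log (1 + Real.cos x) := by
    funext x; ring_nf
  rw [this] at h
  exact h.symm

-- ∫₀^π log(1+cos) = ∫₀^π log(1-cos)
lemma aux_eq_h : (∫ θ in (0:ℝ)..π, Real.log (1 + Real.cos θ))
    = ∫ θ in (0:ℝ)..π, Real.log (1 - Real.cos θ) := by
  have h := intervalIntegral.integral_comp_sub_left
    (a := (0:ℝ)) (b := π) (fun θ => Real.log (1 - Real.cos θ)) π
  simp only [Real.cos_pi_sub, sub_self, sub_zero] at h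
  rw [← h]
  congr 1; funext x; ring_nf

-- ∫₀^{2π} log(1-cos) = 2 * ∫₀^π
lemma aux_two : (∫ θ in (0:ℝ)..(2*π), Real.log (1 - Real.cos θ))
    = 2 * ∫ θ in (0:ℝ)..π, Real.log (1 - Real.cos θ) := by
  have hint2 : IntervalIntegrable (fun θ : ℝ => Real.log (1 - Real.cos θ)) volume π (2*π) := by
    have h := aux_int_g.comp_sub_left (2*π)
    have e : (fun x : ℝ => Real.log (1 - Real.cos (2*π - x)))
        = fun x => Real.log (1 - Real.cos x) := by
      funext x; rw [Real.cos_two_pi_sub]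
    rw [e] at h
    have h2 : (2*π - 0 : ℝ) = 2*π := by ring
    have h3 : (2*π - π : ℝ) = π := by ring
    rw [h2, h3] at h
    exact h.symm
  have hsplit := intervalIntegral.integral_add_adjacent_intervals
    (a := (0:ℝ)) (b := π) (c := 2*π) aux_int_g hint2
  have hback : (∫ θ in π..(2*π), Real.log (1 - Real.cos θ))
      = ∫ θ in (0:ℝ)..π, Real.log (1 - Real.cos θ) := by
    have h := intervalIntegral.integral_comp_sub_left
      (a := (0:ℝ)) (b := π) (fun θ => Real.log (1 - Real.cos θ)) (2*π)
    have e : (fun x : ℝ => Real.log (1 - Real.cos (2*π - x)))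
        = fun x : ℝ => Real.log (1 - Real.cos x) := by
      funext x; rw [Real.cos_two_pi_sub]
    rw [e] at h
    have h2 : (2*π - 0 : ℝ) = 2*π := by ring
    have h3 : (2*π - π : ℝ) = π := by ring
    rw [h2, h3] at h
    exact h.symm
  rw [← hsplit, hback]; ring

lemma aux_M : (∫ θ in (0:ℝ)..π, Real.log (1 - Real.cos θ)) = -(π * Real.log 2) := by
  set M := ∫ θ in (0:ℝ)..π, Real.log (1 - Real.cos θ) with hM
  -- doubling substitution
  have e2 : (∫ u in (0:ℝ)..π, Real.log (1 - Real.cos (2*u))) = M := by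
    have h := intervalIntegral.integral_comp_mul_left
      (a := (0:ℝ)) (b := π) (fun θ => Real.log (1 - Real.cos θ)) (c := 2) two_ne_zero
    rw [h, mul_zero, smul_eq_mul, aux_two]
    ring
  -- a.e. identity
  have e3 : (∫ u in (0:ℝ)..π, Real.log (1 - Real.cos (2*u)))
      = π * Real.log 2 + M + M := by
    have hae : ∀ᵐ u ∂(volume : Measure ℝ), u ∈ Set.uIoc (0:ℝ) π →
        Real.log (1 - Real.cos (2*u))
          = Real.log 2 + (Real.log (1 - Real.cos u) + Real.log (1 + Real.cos u)) := by
      have hne : ∀ᵐ u ∂(volume : Measure ℝ), u ≠ π := by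
        rw [MeasureTheory.ae_iff]
        simp [Set.setOf_eq_eq_singleton]
      filter_upwards [hne] with u hu huI
      rw [Set.uIoc_of_le Real.pi_pos.le] at huI
      obtain ⟨h0u, huπ⟩ := huI
      have huπ' : u < π := lt_of_le_of_ne huπ hu
      have hfac : 1 - Real.cos (2*u) = 2 * ((1 - Real.cos u) * (1 + Real.cos u)) := by
        have h := Real.cos_two_mul u
        have h2 : Real.sin u ^ 2 + Real.cos u ^ 2 = 1 := Real.sin_sq_add_cos_sq u
        nlinarith
      have hp1 : 0 < 1 - Real.cos u := by
        have := aux_half u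
        have hs : 0 < Real.sin (u/2) :=
          Real.sin_pos_of_pos_of_lt_pi (by linarith) (by linarith)
        nlinarith
      have hp2 : 0 < 1 + Real.cos u := by
        have := aux_half' u
        have hc : 0 < Real.cos (u/2) :=
          Real.cos_pos_of_mem_Ioo ⟨by linarith, by linarith⟩
        nlinarith
      rw [hfac, Real.log_mul two_ne_zero (by positivity),
        Real.log_mul hp1.ne' hp2.ne']
    rw [intervalIntegral.integral_congr_ae hae]
    rw [intervalIntegral.integral_add intervalIntegrable_const (aux_int_g.add aux_int_h),
      intervalIntegral.integral_add aux_int_g aux_int_h,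
      intervalIntegral.integral_const, aux_eq_h]
    simp [smul_eq_mul]
    ring
  have := e2.symm.trans e3
  linarith


lemma aux_int_g2 : IntervalIntegrable (fun θ : ℝ => Real.log (1 - Real.cos θ)) volume 0 (2*π) := by
  have hint2 : IntervalIntegrable (fun θ : ℝ => Real.log (1 - Real.cos θ)) volume π (2*π) := by
    have h := aux_int_g.comp_sub_left (2*π)
    have e : (fun x : ℝ => Real.log (1 - Real.cos (2*π - x)))
        = fun x => Real.log (1 - Real.cos x) := by
      funext x; rw [Real.cos_two_pi_sub]
    rw [e] at h
    have h2 : (2*π - 0 : ℝ) = 2*π := by ring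
    have h3 : (2*π - π : ℝ) = π := by ring
    rw [h2, h3] at h
    exact h.symm
  exact aux_int_g.trans hint2

lemma aux_I2 : (∫ θ in (0:ℝ)..(2*π), Real.cos θ * Real.log (1 - Real.cos θ)) = -(2*π) := by
  set F : ℝ → ℝ := fun θ =>
    Real.sin θ * Real.log 2
      + 4 * Real.cos (θ/2) * (Real.sin (θ/2) * Real.log (Real.sin (θ/2)))
      - θ - Real.sin θ with hF
  have hcont : Continuous F := by
    apply Continuous.sub
    apply Continuous.sub
    apply Continuous.add
    · exact Real.continuous_sin.mul continuous_const
    · exact (continuous_const.mul (Real.continuous_cos.comp (continuous_id.div_const 2))).mul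
        (Real.continuous_mul_log.comp (Real.continuous_sin.comp (continuous_id.div_const 2)))
    · exact continuous_id
    · exact Real.continuous_sin
  have hderiv : ∀ θ ∈ Set.Ioo (0:ℝ) (2*π),
      HasDerivAt F (Real.cos θ * Real.log (1 - Real.cos θ)) θ := by
    intro θ hθ
    obtain ⟨h0, h2π⟩ := hθ
    have hs : 0 < Real.sin (θ/2) :=
      Real.sin_pos_of_pos_of_lt_pi (by linarith) (by linarith)
    have hhalf : HasDerivAt (fun θ : ℝ => θ/2) (1/2) θ := (hasDerivAt_id θ).div_const 2
    have hsin : HasDerivAt (fun θ : ℝ => Real.sin (θ/2)) (Real.cos (θ/2) * (1/2)) θ :=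
      ((Real.hasDerivAt_sin (θ/2)).comp θ hhalf :)
    have hcos : HasDerivAt (fun θ : ℝ => Real.cos (θ/2)) (-Real.sin (θ/2) * (1/2)) θ :=
      ((Real.hasDerivAt_cos (θ/2)).comp θ hhalf :)
    have hlog : HasDerivAt (fun θ : ℝ => Real.log (Real.sin (θ/2)))
        ((Real.cos (θ/2) * (1/2)) / Real.sin (θ/2)) θ := hsin.log hs.ne'
    have hT : HasDerivAt (fun θ : ℝ =>
        4 * Real.cos (θ/2) * (Real.sin (θ/2) * Real.log (Real.sin (θ/2))))
        ((4 * (-Real.sin (θ/2) * (1/2))) * (Real.sin (θ/2) * Real.log (Real.sin (θ/2)))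
          + (4 * Real.cos (θ/2)) * ((Real.cos (θ/2) * (1/2)) * Real.log (Real.sin (θ/2))
            + Real.sin (θ/2) * ((Real.cos (θ/2) * (1/2)) / Real.sin (θ/2)))) θ :=
      (hcos.const_mul 4).mul (hsin.mul hlog)
    have h1 : HasDerivAt (fun θ : ℝ => Real.sin θ * Real.log 2)
        (Real.cos θ * Real.log 2) θ := (Real.hasDerivAt_sin θ).mul_const _
    have hFull := ((h1.add hT).sub (hasDerivAt_id θ)).sub (Real.hasDerivAt_sin θ)
    convert hFull using 1
    · rfl
    · rfl
    · rfl
    have hsinθ : Real.sin θ = 2 * Real.sin (θ/2) * Real.cos (θ/2) := by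
      have := Real.sin_two_mul (θ/2)
      have h3 : (2:ℝ) * (θ/2) = θ := by ring
      rw [h3] at this
      linarith
    have hcosθ : Real.cos θ = 1 - 2 * Real.sin (θ/2)^2 := by
      have := aux_half θ; linarith
    rw [aux_key h0 h2π]
    have hdiv : Real.sin (θ/2) * ((Real.cos (θ/2) * (1/2)) / Real.sin (θ/2))
        = Real.cos (θ/2) * (1/2) := by
      field_simp
    rw [hdiv]
    have hpyth : Real.sin (θ/2)^2 + Real.cos (θ/2)^2 = 1 := Real.sin_sq_add_cos_sq _
    rw [hcosθ]
    linear_combination (-(2 * Real.log (Real.sin (θ/2))) - 2) * hpyth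
  have hint : IntervalIntegrable (fun θ : ℝ => Real.cos θ * Real.log (1 - Real.cos θ))
      volume 0 (2*π) :=
    aux_int_g2.continuousOn_mul Real.continuous_cos.continuousOn
  have := intervalIntegral.integral_eq_sub_of_hasDeriv_right_of_le
    (by positivity : (0:ℝ) ≤ 2*π) hcont.continuousOn
    (fun x hx => (hderiv x hx).hasDerivWithinAt) hint
  rw [this]
  have e1 : (2*π)/2 = π := by ring
  have e0 : (0:ℝ)/2 = 0 := by norm_num
  simp [hF, e1, e0, Real.sin_two_pi, Real.sin_pi, Real.cos_pi]

/-- `∫₀^{2π} (1 - cos θ) log(1 - cos θ) dθ/(2π) = 1 - log 2`. -/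
theorem entropy_lambda_one :
    (∫ θ in (0:ℝ)..(2 * π), (1 - Real.cos θ) * Real.log (1 - Real.cos θ)) / (2 * π)
      = 1 - Real.log 2 := by
  have hint : IntervalIntegrable (fun θ : ℝ => Real.cos θ * Real.log (1 - Real.cos θ))
      volume 0 (2*π) :=
    aux_int_g2.continuousOn_mul Real.continuous_cos.continuousOn
  have hsplit : (∫ θ in (0:ℝ)..(2 * π), (1 - Real.cos θ) * Real.log (1 - Real.cos θ))
      = (∫ θ in (0:ℝ)..(2*π), Real.log (1 - Real.cos θ))
        - ∫ θ in (0:ℝ)..(2*π), Real.cos θ * Real.log (1 - Real.cos θ) := by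
    rw [← intervalIntegral.integral_sub aux_int_g2 hint]
    apply intervalIntegral.integral_congr
    intro θ _
    ring
  rw [hsplit, aux_two, aux_M, aux_I2]
  rw [div_eq_iff (by positivity : (2*π : ℝ) ≠ 0)]
  ring
end

section
/- For a complex p×p matrix α with α·α† < 1, define R(α) := -log det(1 - α·α†) - tr(α·α†) - (1/2)·tr((α·α†)²). Then R(α) > 0 whenever α ≠ 0, and R(α) = o(tr((α·α†)²)) as α → 0. -/
open Matrix Asymptotics
open scoped ComplexOrder

/-- The remainder in the expansion of `-log det(1 - ααᴴ)`. -/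
noncomputable def RRem (p : ℕ) (α : Matrix (Fin p) (Fin p) ℂ) : ℝ :=
  -Real.log (((1 : Matrix (Fin p) (Fin p) ℂ) - α * αᴴ).det.re)
    - ((α * αᴴ).trace).re - (1 / 2) * (((α * αᴴ) ^ 2).trace).re

/- ### Scalar lemmas -/

noncomputable def rf (x : ℝ) : ℝ := -Real.log (1 - x) - x - x ^ 2 / 2

lemma rf_hasDeriv {x : ℝ} (hx : x < 1) : HasDerivAt rf (1 / (1 - x) - 1 - x) x := by
  have h1 : (1 : ℝ) - x ≠ 0 := by linarith
  have hlog : HasDerivAt (fun y : ℝ => Real.log (1 - y)) ((1 - x)⁻¹ * (-1)) x :=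
    (Real.hasDerivAt_log h1).comp x (((hasDerivAt_id x).const_sub 1))
  have h2 : HasDerivAt (fun y : ℝ => y ^ 2 / 2) x x := by
    simpa using ((hasDerivAt_pow 2 x).div_const 2)
  have := (hlog.neg.sub (hasDerivAt_id x)).sub h2
  rw [show (1 / (1 - x) - 1 - x) = -((1 - x)⁻¹ * -1) - 1 - x by ring]
  exact this

lemma rf_strictMonoOn : StrictMonoOn rf (Set.Ico (0:ℝ) 1) := by
  apply strictMonoOn_of_deriv_pos (convex_Ico 0 1)
  · intro x hx
    exact (rf_hasDeriv hx.2).continuousAt.continuousWithinAt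
  · intro x hx
    rw [interior_Ico] at hx
    obtain ⟨hx0, hx1⟩ := hx
    rw [(rf_hasDeriv hx1).deriv]
    have h1 : (0:ℝ) < 1 - x := by linarith
    rw [sub_sub, div_sub' h1.ne']
    have h2 : 1 - (1 - x) * (1 + x) = x ^ 2 := by ring
    rw [h2]
    exact div_pos (pow_pos hx0 2) h1

lemma rf_zero : rf 0 = 0 := by simp [rf]

lemma rf_nonneg {x : ℝ} (h0 : 0 ≤ x) (h1 : x < 1) : 0 ≤ rf x := by
  rcases eq_or_lt_of_le h0 with h | h
  · simp [← h, rf_zero]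
  · have := rf_strictMonoOn (Set.mem_Ico.2 ⟨le_refl 0, one_pos⟩) (Set.mem_Ico.2 ⟨h0, h1⟩) h
    rw [rf_zero] at this; linarith

lemma rf_pos {x : ℝ} (h0 : 0 < x) (h1 : x < 1) : 0 < rf x := by
  have := rf_strictMonoOn (Set.mem_Ico.2 ⟨le_refl 0, one_pos⟩) (Set.mem_Ico.2 ⟨h0.le, h1⟩) h0
  rw [rf_zero] at this; linarith

lemma rf_abs_le {x : ℝ} (h0 : 0 ≤ x) (h1 : x ≤ 1/2) : |rf x| ≤ 2 * x ^ 3 := by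
  have hx1 : |x| < 1 := by rw [abs_of_nonneg h0]; linarith
  have := Real.abs_log_sub_add_sum_range_le hx1 2
  have hsum : ∑ i ∈ Finset.range 2, x ^ (i + 1) / (i + 1) = x + x ^ 2 / 2 := by
    simp [Finset.sum_range_succ]; ring
  rw [hsum, abs_of_nonneg h0] at this
  norm_num at this
  have heq : |rf x| = |x + x ^ 2 / 2 + Real.log (1 - x)| := by
    rw [rf, ← abs_neg]; ring_nf
  rw [heq]
  refine this.trans ?_
  rw [div_le_iff₀ (by linarith : (0:ℝ) < 1 - x)]
  nlinarith [pow_nonneg h0 3]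

/- ### Matrix spectral lemmas -/

section aux
variable {p : ℕ} (A V : Matrix (Fin p) (Fin p) ℂ) (lam : Fin p → ℝ)

lemma trace_re_eq (hV' : star V * V = 1)
    (hspec : A = V * diagonal (RCLike.ofReal ∘ lam) * star V) :
    A.trace.re = ∑ i, lam i := by
  rw [hspec, trace_mul_cycle, hV', Matrix.one_mul, trace_diagonal]
  simp [Complex.re_sum]

lemma trace_sq_re_eq (hV' : star V * V = 1)
    (hspec : A = V * diagonal (RCLike.ofReal ∘ lam) * star V) :
    ((A ^ 2).trace).re = ∑ i, lam i ^ 2 := by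
  set D := diagonal (RCLike.ofReal ∘ lam : Fin p → ℂ) with hDdef
  have h2 : A ^ 2 = V * (D * D) * star V := by
    rw [pow_two, hspec]
    calc V * D * star V * (V * D * star V)
        = V * (D * ((star V * V) * (D * star V))) := by simp only [Matrix.mul_assoc]
      _ = V * (D * D) * star V := by rw [hV', Matrix.one_mul]; simp only [Matrix.mul_assoc]
  rw [h2, trace_mul_cycle, hV', Matrix.one_mul, hDdef,
    diagonal_mul_diagonal, trace_diagonal]
  simp only [Complex.re_sum, ← pow_two, Function.comp_apply]
  norm_num [← Complex.ofReal_pow]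

lemma det_one_sub_re_eq (hV : V * star V = 1) (hV' : star V * V = 1)
    (hspec : A = V * diagonal (RCLike.ofReal ∘ lam) * star V) :
    ((1 - A).det).re = ∏ i, (1 - lam i) := by
  set D := diagonal (RCLike.ofReal ∘ lam : Fin p → ℂ) with hDdef
  have h1 : (1 : Matrix (Fin p) (Fin p) ℂ) - A = V * (1 - D) * star V := by
    rw [Matrix.mul_sub, Matrix.sub_mul, Matrix.mul_one, hV, hspec]
  rw [h1, det_mul, det_mul, mul_comm, ← mul_assoc, ← det_mul, hV', det_one, one_mul]
  have : (1 : Matrix (Fin p) (Fin p) ℂ) - D = diagonal (fun i => 1 - (lam i : ℂ)) := by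
    rw [hDdef, ← diagonal_one, diagonal_sub]
    rfl
  rw [this, det_diagonal]
  simp only [← Complex.ofReal_one, ← Complex.ofReal_sub]
  rw [← Complex.ofReal_prod, Complex.ofReal_re]
end aux

lemma eig_lt_one {p : ℕ} {A : Matrix (Fin p) (Fin p) ℂ} (hA : A.IsHermitian)
    (hPD : ((1 : Matrix (Fin p) (Fin p) ℂ) - A).PosDef) (i : Fin p) :
    hA.eigenvalues i < 1 := by
  set v : Fin p → ℂ := ⇑(hA.eigenvectorBasis i) with hvdef
  have hv0 : v ≠ 0 := by
    have := hA.eigenvectorBasis.orthonormal.ne_zero i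
    intro h
    apply this
    ext j
    exact congrFun h j
  have hmul : A *ᵥ v = hA.eigenvalues i • v := hA.mulVec_eigenvectorBasis i
  have hpos := hPD.re_dotProduct_pos hv0
  rw [Matrix.sub_mulVec, Matrix.one_mulVec, hmul] at hpos
  set c : ℝ := (dotProduct (star v) v).re with hcdef
  have hc : 0 < c := by
    have h2 := Matrix.dotProduct_star_self_pos_iff (v := v).mpr hv0
    rw [Complex.lt_def] at h2
    simpa [hcdef] using h2.1
  have hre : RCLike.re (dotProduct (star v) (v - hA.eigenvalues i • v))
      = (1 - hA.eigenvalues i) * c := by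
    rw [RCLike.re_to_complex]
    rw [dotProduct_sub]
    have : dotProduct (star v) (hA.eigenvalues i • v)
        = (hA.eigenvalues i : ℂ) * dotProduct (star v) v := by
      simp [dotProduct, Finset.mul_sum, Complex.real_smul]
      exact Finset.sum_congr rfl fun j _ => by ring
    rw [this]
    simp [Complex.sub_re, Complex.mul_re, Complex.ofReal_re, Complex.ofReal_im]
    ring
  rw [hre] at hpos
  nlinarith

lemma trace_re_pos {p : ℕ} (α : Matrix (Fin p) (Fin p) ℂ) (hα : α ≠ 0) :
    0 < ((α * αᴴ).trace).re := by
  have hform : ((α * αᴴ).trace).re = ∑ i, ∑ j, Complex.normSq (α i j) := by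
    simp [Matrix.trace, Matrix.diag, Matrix.mul_apply, Matrix.conjTranspose_apply,
      Complex.re_sum, Complex.mul_conj]
  obtain ⟨i, j, hij⟩ : ∃ i j, α i j ≠ 0 := by
    by_contra h
    push_neg at h
    exact hα (Matrix.ext fun i j => h i j)
  rw [hform]
  refine Finset.sum_pos'
    (fun _ _ => Finset.sum_nonneg fun _ _ => Complex.normSq_nonneg _)
    ⟨i, Finset.mem_univ i, Finset.sum_pos'
      (fun _ _ => Complex.normSq_nonneg _)
      ⟨j, Finset.mem_univ j, Complex.normSq_pos.mpr hij⟩⟩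

lemma RRem_eq_sum {p : ℕ} (α : Matrix (Fin p) (Fin p) ℂ)
    (hA : (α * αᴴ).IsHermitian) (h1 : ∀ i, hA.eigenvalues i < 1) :
    RRem p α = ∑ i, rf (hA.eigenvalues i) := by
  have hV : (hA.eigenvectorUnitary : Matrix (Fin p) (Fin p) ℂ) * star
      (hA.eigenvectorUnitary : Matrix (Fin p) (Fin p) ℂ) = 1 :=
    Matrix.mem_unitaryGroup_iff.mp hA.eigenvectorUnitary.2
  have hV' : star (hA.eigenvectorUnitary : Matrix (Fin p) (Fin p) ℂ) *
      (hA.eigenvectorUnitary : Matrix (Fin p) (Fin p) ℂ) = 1 :=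
    Matrix.mem_unitaryGroup_iff'.mp hA.eigenvectorUnitary.2
  have hspec := hA.spectral_theorem
  rw [RRem, trace_re_eq _ _ _ hV' hspec, trace_sq_re_eq _ _ _ hV' hspec,
    det_one_sub_re_eq _ _ _ hV hV' hspec,
    Real.log_prod (fun i _ => by have := h1 i; intro h; linarith)]
  simp only [rf, Finset.sum_sub_distrib, Finset.sum_neg_distrib, ← Finset.sum_div]
  ring

/-- `R(α) > 0` for nonzero strict contractions `α`, and `R(α) = o(tr((ααᴴ)²))` as `α → 0`. -/
theorem remainder_pos_and_littleO (p : ℕ) :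
    (∀ α : Matrix (Fin p) (Fin p) ℂ,
        ((1 : Matrix (Fin p) (Fin p) ℂ) - α * αᴴ).PosDef → α ≠ 0 → 0 < RRem p α) ∧
      (fun α : Matrix (Fin p) (Fin p) ℂ => RRem p α)
        =o[nhds 0] fun α => (((α * αᴴ) ^ 2).trace).re := by
  constructor
  · intro α hPD hα0
    have hA : (α * αᴴ).IsHermitian := isHermitian_mul_conjTranspose_self α
    have hlt : ∀ i, hA.eigenvalues i < 1 := eig_lt_one hA hPD
    have hnn : ∀ i, 0 ≤ hA.eigenvalues i := fun i =>
      (Matrix.posSemidef_self_mul_conjTranspose α).eigenvalues_nonneg i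
    rw [RRem_eq_sum α hA hlt]
    have htr := trace_re_pos α hα0
    rw [trace_re_eq _ _ _ (Matrix.mem_unitaryGroup_iff'.mp hA.eigenvectorUnitary.2)
      hA.spectral_theorem] at htr
    obtain ⟨i, hi⟩ : ∃ i, 0 < hA.eigenvalues i := by
      by_contra h
      push_neg at h
      have : ∑ i, hA.eigenvalues i ≤ 0 := Finset.sum_nonpos fun i _ => h i
      linarith
    exact Finset.sum_pos' (fun i _ => rf_nonneg (hnn i) (hlt i))
      ⟨i, Finset.mem_univ i, rf_pos hi (hlt i)⟩
  · rw [isLittleO_iff]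
    intro c hc
    set g : Matrix (Fin p) (Fin p) ℂ → ℝ := fun α => ((α * αᴴ).trace).re with hgdef
    have hgcont : Continuous g := by
      exact Complex.continuous_re.comp
        ((continuous_id.matrix_mul continuous_id.matrix_conjTranspose).matrix_trace)
    have hg0 : g 0 = 0 := by simp [hgdef]
    have hδ : (0:ℝ) < min (1/2) (c/2) := by positivity
    have hev : ∀ᶠ α in nhds (0 : Matrix (Fin p) (Fin p) ℂ), g α < min (1/2) (c/2) := by
      have := hgcont.continuousAt (x := 0)
      rw [ContinuousAt, hg0] at this
      exact this.eventually_lt_const hδ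
    filter_upwards [hev] with α hαlt
    have hA : (α * αᴴ).IsHermitian := isHermitian_mul_conjTranspose_self α
    have hnn : ∀ i, 0 ≤ hA.eigenvalues i := fun i =>
      (Matrix.posSemidef_self_mul_conjTranspose α).eigenvalues_nonneg i
    have hV' := Matrix.mem_unitaryGroup_iff'.mp hA.eigenvectorUnitary.2
    have hsum : g α = ∑ i, hA.eigenvalues i := trace_re_eq _ _ _ hV' hA.spectral_theorem
    have hle : ∀ i, hA.eigenvalues i ≤ g α := by
      intro i
      rw [hsum]
      exact Finset.single_le_sum (fun j _ => hnn j) (Finset.mem_univ i)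
    have hhalf : ∀ i, hA.eigenvalues i ≤ 1/2 := fun i =>
      (hle i).trans (le_of_lt (hαlt.trans_le (min_le_left _ _)))
    have hlt1 : ∀ i, hA.eigenvalues i < 1 := fun i => lt_of_le_of_lt (hhalf i) (by norm_num)
    have hsq : (((α * αᴴ) ^ 2).trace).re = ∑ i, hA.eigenvalues i ^ 2 :=
      trace_sq_re_eq _ _ _ hV' hA.spectral_theorem
    have hsqnn : 0 ≤ ∑ i, hA.eigenvalues i ^ 2 :=
      Finset.sum_nonneg fun i _ => sq_nonneg _
    rw [RRem_eq_sum α hA hlt1, hsq, Real.norm_eq_abs, Real.norm_eq_abs,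
      abs_of_nonneg hsqnn]
    calc |∑ i, rf (hA.eigenvalues i)| ≤ ∑ i, |rf (hA.eigenvalues i)| :=
          Finset.abs_sum_le_sum_abs _ _
      _ ≤ ∑ i, 2 * hA.eigenvalues i ^ 3 :=
          Finset.sum_le_sum fun i _ => rf_abs_le (hnn i) (hhalf i)
      _ ≤ ∑ i, 2 * (g α * hA.eigenvalues i ^ 2) := by
          refine Finset.sum_le_sum fun i _ => ?_
          have : hA.eigenvalues i ^ 3 = hA.eigenvalues i * hA.eigenvalues i ^ 2 := by ring
          rw [this]
          exact mul_le_mul_of_nonneg_left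
            (mul_le_mul_of_nonneg_right (hle i) (sq_nonneg _)) (by norm_num)
      _ = 2 * g α * ∑ i, hA.eigenvalues i ^ 2 := by
          rw [Finset.mul_sum]
          exact Finset.sum_congr rfl fun i _ => by ring
      _ ≤ c * ∑ i, hA.eigenvalues i ^ 2 := by
          refine mul_le_mul_of_nonneg_right ?_ hsqnn
          have := hαlt.trans_le (min_le_right _ _)
          linarith
end

section
/- Let α₀ and f be p×p complex matrices with α₀ a strict contraction, and set ρ^R := (1 - α₀·α₀†)^{1/2}, ρ^L := (1 - α₀†·α₀)^{1/2}. Then (1 - f†·α₀)·(ρ^L)^{-2}·(1 - α₀†·f) - (f† - α₀†)·(ρ^R)^{-2}·(f - α₀) = 1 - f†·f. -/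
open Matrix
open scoped ComplexOrder

/-- The square root of a positive semidefinite matrix, as defined in the older Mathlib
(removed since). -/
noncomputable def Matrix.PosSemidef.sqrt {n : Type*} [Fintype n] [DecidableEq n] {𝕜 : Type*}
    [RCLike 𝕜] {A : Matrix n n 𝕜} (hA : A.PosSemidef) : Matrix n n 𝕜 :=
  hA.1.eigenvectorUnitary.1 * diagonal ((↑) ∘ (√·) ∘ hA.1.eigenvalues) *
    (star hA.1.eigenvectorUnitary : Matrix n n 𝕜)

lemma Matrix.PosSemidef.sqrt_mul_self {n : Type*} [Fintype n] [DecidableEq n] {𝕜 : Type*}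
    [RCLike 𝕜] {A : Matrix n n 𝕜} (hA : A.PosSemidef) : hA.sqrt * hA.sqrt = A := by
  have hU : (star hA.1.eigenvectorUnitary : Matrix n n 𝕜) * hA.1.eigenvectorUnitary.1 = 1 :=
    Unitary.coe_star_mul_self _
  have hD : diagonal (((↑) ∘ (√·) ∘ hA.1.eigenvalues : n → 𝕜)) *
      diagonal ((↑) ∘ (√·) ∘ hA.1.eigenvalues) = diagonal (RCLike.ofReal ∘ hA.1.eigenvalues) := by
    rw [diagonal_mul_diagonal]
    congr 1
    funext i
    simp only [Function.comp]
    rw [← RCLike.ofReal_mul, Real.mul_self_sqrt (hA.eigenvalues_nonneg i)]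
  conv_rhs => rw [hA.1.spectral_theorem, Unitary.conjStarAlgAut_apply]
  unfold Matrix.PosSemidef.sqrt
  simp only [Matrix.mul_assoc]
  rw [← Matrix.mul_assoc (star _ : Matrix n n 𝕜) _ (_ * _), hU, Matrix.one_mul,
    ← Matrix.mul_assoc (diagonal _) (diagonal _), hD]

private lemma schur_aux {p : ℕ} (a b g f X Y : Matrix (Fin p) (Fin p) ℂ)
    (h1 : a * X = Y * a) (h2 : X * b = b * Y) (h4 : a * X * b = Y - 1)
    (h3 : X = 1 + b * (Y * a)) :
    (1 - g * a) * X * (1 - b * f) - (g - b) * Y * (f - a) = 1 - g * f := by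
  have expand : (1 - g * a) * X * (1 - b * f) - (g - b) * Y * (f - a)
      = X - X * b * f - g * (a * X) + g * (a * X * b) * f
        - g * Y * f + g * (Y * a) + b * Y * f - b * (Y * a) := by
    noncomm_ring
  rw [expand, h4, h1, h2, h3]
  noncomm_ring

/-- The key algebraic identity of the matrix Schur algorithm:
`(1 - f†α₀)(ρ^L)⁻²(1 - α₀†f) - (f† - α₀†)(ρ^R)⁻²(f - α₀) = 1 - f†f`. -/
theorem schur_algebraic_identity (p : ℕ) (α₀ f : Matrix (Fin p) (Fin p) ℂ)
    (hR : ((1 : Matrix (Fin p) (Fin p) ℂ) - α₀ * α₀ᴴ).PosDef)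
    (hL : ((1 : Matrix (Fin p) (Fin p) ℂ) - α₀ᴴ * α₀).PosDef) :
    (1 - fᴴ * α₀) * (hL.posSemidef.sqrt⁻¹) ^ 2 * (1 - α₀ᴴ * f)
        - (fᴴ - α₀ᴴ) * (hR.posSemidef.sqrt⁻¹) ^ 2 * (f - α₀)
      = 1 - fᴴ * f := by
  set L : Matrix (Fin p) (Fin p) ℂ := 1 - α₀ᴴ * α₀ with hLdef
  set R : Matrix (Fin p) (Fin p) ℂ := 1 - α₀ * α₀ᴴ with hRdef
  have hLd : IsUnit L.det := hL.det_pos.ne'.isUnit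
  have hRd : IsUnit R.det := hR.det_pos.ne'.isUnit
  have hsqL : (hL.posSemidef.sqrt⁻¹) ^ 2 = L⁻¹ := by
    rw [pow_two, ← Matrix.mul_inv_rev, hL.posSemidef.sqrt_mul_self]
  have hsqR : (hR.posSemidef.sqrt⁻¹) ^ 2 = R⁻¹ := by
    rw [pow_two, ← Matrix.mul_inv_rev, hR.posSemidef.sqrt_mul_self]
  rw [hsqL, hsqR]
  -- intertwining relation
  have comm : α₀ * L = R * α₀ := by rw [hLdef, hRdef]; noncomm_ring
  have h1 : α₀ * L⁻¹ = R⁻¹ * α₀ := by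
    calc α₀ * L⁻¹ = R⁻¹ * (R * α₀) * L⁻¹ := by
          rw [← Matrix.mul_assoc, Matrix.nonsing_inv_mul R hRd, Matrix.one_mul]
      _ = R⁻¹ * (α₀ * L) * L⁻¹ := by rw [comm]
      _ = R⁻¹ * α₀ := by
          rw [← Matrix.mul_assoc R⁻¹ α₀ L, Matrix.mul_assoc (R⁻¹ * α₀) L L⁻¹,
            Matrix.mul_nonsing_inv L hLd, Matrix.mul_one]
  have h2 : L⁻¹ * α₀ᴴ = α₀ᴴ * R⁻¹ := by
    have hLh : Lᴴ = L := by
      rw [hLdef]; simp [conjTranspose_sub, conjTranspose_mul]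
    have hRh : Rᴴ = R := by
      rw [hRdef]; simp [conjTranspose_sub, conjTranspose_mul]
    have := congrArg conjTranspose h1
    simpa [conjTranspose_mul, Matrix.conjTranspose_nonsing_inv, hLh, hRh] using this
  have h4 : α₀ * L⁻¹ * α₀ᴴ = R⁻¹ - 1 := by
    rw [h1, Matrix.mul_assoc]
    have : α₀ * α₀ᴴ = 1 - R := by rw [hRdef]; noncomm_ring
    rw [this, Matrix.mul_sub, Matrix.mul_one, Matrix.nonsing_inv_mul R hRd]
  have h3 : L⁻¹ = 1 + α₀ᴴ * (R⁻¹ * α₀) := by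
    have hba : α₀ᴴ * (R⁻¹ * α₀) = L⁻¹ * (α₀ᴴ * α₀) := by
      rw [← Matrix.mul_assoc, ← h2, Matrix.mul_assoc]
    rw [hba]
    have : (α₀ᴴ * α₀ : Matrix (Fin p) (Fin p) ℂ) = 1 - L := by rw [hLdef]; noncomm_ring
    rw [this, Matrix.mul_sub, Matrix.mul_one, Matrix.nonsing_inv_mul L hLd]
    noncomm_ring
  exact schur_aux α₀ α₀ᴴ fᴴ f L⁻¹ R⁻¹ h1 h2 h4 h3
end

section
/- Let h be an analytic function on the unit disc with |Im h(z)| < 3π/2 for all z and h(0) real. Then sup_{r<1} ∫₀^{2π} |h(re^{iθ})|² dθ/(2π) ≤ 9π²/2 + h(0)², so h belongs to the Hardy space H²(𝔻). -/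
open Real MeasureTheory

private lemma mean_value_circle (g : ℂ → ℂ) (hg : DifferentiableOn ℂ g (Metric.ball 0 1))
    {r : ℝ} (hr0 : 0 ≤ r) (hr1 : r < 1) :
    (∫ θ in (0:ℝ)..(2 * π), g (r * Complex.exp (θ * Complex.I))) = (2 * π) * g 0 := by
  rcases eq_or_lt_of_le hr0 with rfl | hr
  · simp [Real.pi_pos.le, mul_comm]
  · have hw : (0:ℂ) ∈ Metric.ball (0:ℂ) r := by simpa using hr
    have hsub : Metric.closedBall (0:ℂ) r ⊆ Metric.ball 0 1 :=
      Metric.closedBall_subset_ball hr1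
    have key := (hg.mono hsub).circleIntegral_sub_inv_smul hw
    rw [circleIntegral] at key
    have hne : ∀ θ : ℝ, circleMap 0 r θ ≠ 0 := fun θ => circleMap_ne_center hr.ne'
    have : (∫ θ in (0:ℝ)..(2 * π),
        deriv (circleMap 0 r) θ • ((circleMap 0 r θ - 0)⁻¹ • g (circleMap 0 r θ)))
        = ∫ θ in (0:ℝ)..(2 * π), Complex.I * g (circleMap 0 r θ) := by
      refine intervalIntegral.integral_congr fun θ _ => ?_
      rw [deriv_circleMap]
      field_simp [hne θ]
      simp only [smul_eq_mul, sub_zero, one_div]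
      rw [mul_comm (circleMap 0 r θ) Complex.I, mul_assoc, ← mul_assoc (circleMap 0 r θ),
        mul_inv_cancel₀ (hne θ), one_mul]
    rw [this, intervalIntegral.integral_const_mul] at key
    have := mul_left_cancel₀ Complex.I_ne_zero
      (by rw [key, smul_eq_mul]; ring :
        Complex.I * (∫ θ in (0:ℝ)..(2 * π), g (circleMap 0 r θ))
          = Complex.I * ((2 * π) * g 0))
    simpa [circleMap_zero] using this

/-- If `h` is analytic on the unit disc with `|Im h| < 3π/2` and `h(0)` real, then
`sup_{r<1} ∫₀^{2π} |h(re^{iθ})|² dθ/(2π) ≤ 9π²/2 + h(0)²`, so `h ∈ H²(𝔻)`. -/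
theorem bounded_imaginary_part_H2 (h : ℂ → ℂ)
    (hanal : AnalyticOnNhd ℂ h (Metric.ball 0 1))
    (him : ∀ z ∈ Metric.ball (0:ℂ) 1, |(h z).im| < 3 * π / 2)
    (h0 : (h 0).im = 0) :
    ∀ r : ℝ, 0 ≤ r → r < 1 →
      (∫ θ in (0:ℝ)..(2 * π), ‖h (r * Complex.exp (θ * Complex.I))‖ ^ 2) / (2 * π)
        ≤ 9 * π ^ 2 / 2 + (h 0).re ^ 2 := by
  intro r hr0 hr1
  have hmem : ∀ θ : ℝ, ((r:ℂ) * Complex.exp (θ * Complex.I)) ∈ Metric.ball (0:ℂ) 1 := by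
    intro θ
    simp only [Metric.mem_ball, dist_zero_right, norm_mul,
      Complex.norm_exp]
    simp [abs_of_nonneg hr0, hr1]
  -- continuity of θ ↦ h (r e^{iθ})
  have hcont : Continuous fun θ : ℝ => h ((r:ℂ) * Complex.exp (θ * Complex.I)) := by
    have hmap : Continuous fun θ : ℝ => (r:ℂ) * Complex.exp (θ * Complex.I) := by
      continuity
    exact hanal.continuousOn.comp_continuous hmap hmem
  -- mean value for g = h^2
  have hg : DifferentiableOn ℂ (fun z => (h z) ^ 2) (Metric.ball 0 1) :=
    fun z hz => ((hanal z hz).differentiableAt.pow 2).differentiableWithinAt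
  have hmv := mean_value_circle (fun z => (h z) ^ 2) hg hr0 hr1
  -- real part of the mean value identity
  have hre : (∫ θ in (0:ℝ)..(2 * π), ((h ((r:ℂ) * Complex.exp (θ * Complex.I))) ^ 2).re)
      = (2 * π) * (h 0).re ^ 2 := by
    have hint : IntervalIntegrable
        (fun θ : ℝ => (h ((r:ℂ) * Complex.exp (θ * Complex.I))) ^ 2) volume 0 (2 * π) :=
      ((hcont.pow 2).intervalIntegrable _ _)
    have := (Complex.reCLM.intervalIntegral_comp_comm hint).symm
    simp only [Complex.reCLM_apply] at this
    rw [← this, hmv]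
    simp [Complex.mul_re, h0, sq]
  -- pointwise bound
  have hpt : ∀ θ : ℝ, ‖h ((r:ℂ) * Complex.exp (θ * Complex.I))‖ ^ 2
      ≤ ((h ((r:ℂ) * Complex.exp (θ * Complex.I))) ^ 2).re + 9 * π ^ 2 / 2 := by
    intro θ
    set w := h ((r:ℂ) * Complex.exp (θ * Complex.I)) with hw
    have him' : |w.im| < 3 * π / 2 := him _ (hmem θ)
    have him2 : w.im ^ 2 ≤ (3 * π / 2) ^ 2 := by
      have := sq_le_sq' (neg_le_of_abs_le him'.le) (le_of_abs_le him'.le)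
      simpa using this
    have hnorm : ‖w‖ ^ 2 = w.re ^ 2 + w.im ^ 2 := by
      rw [Complex.sq_norm]
      simp [Complex.normSq_apply, sq]
    have hresq : (w ^ 2).re = w.re ^ 2 - w.im ^ 2 := by
      simp [sq, Complex.mul_re]
    rw [hnorm, hresq]
    nlinarith [him2]
  have hcre : Continuous fun θ : ℝ => ((h ((r:ℂ) * Complex.exp (θ * Complex.I))) ^ 2).re :=
    Complex.continuous_re.comp (hcont.pow 2)
  -- integrate the bound
  have hintL : IntervalIntegrable
      (fun θ : ℝ => ‖h ((r:ℂ) * Complex.exp (θ * Complex.I))‖ ^ 2) volume 0 (2 * π) :=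
    ((hcont.norm.pow 2).intervalIntegrable _ _)
  have hintR : IntervalIntegrable
      (fun θ : ℝ => ((h ((r:ℂ) * Complex.exp (θ * Complex.I))) ^ 2).re + 9 * π ^ 2 / 2)
      volume 0 (2 * π) := by
    apply IntervalIntegrable.add
    · exact hcre.intervalIntegrable _ _
    · exact intervalIntegrable_const
  have hle : (∫ θ in (0:ℝ)..(2 * π), ‖h ((r:ℂ) * Complex.exp (θ * Complex.I))‖ ^ 2)
      ≤ ∫ θ in (0:ℝ)..(2 * π),
        (((h ((r:ℂ) * Complex.exp (θ * Complex.I))) ^ 2).re + 9 * π ^ 2 / 2) := by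
    apply intervalIntegral.integral_mono_on (by positivity) hintL hintR
    intro θ _
    exact hpt θ
  have hsplit : (∫ θ in (0:ℝ)..(2 * π),
      (((h ((r:ℂ) * Complex.exp (θ * Complex.I))) ^ 2).re + 9 * π ^ 2 / 2))
      = (2 * π) * (h 0).re ^ 2 + (2 * π) * (9 * π ^ 2 / 2) := by
    rw [intervalIntegral.integral_add (hcre.intervalIntegrable _ _)
      intervalIntegrable_const, hre]
    simp only [intervalIntegral.integral_const, smul_eq_mul]
    ring
  have hpi : (0:ℝ) < 2 * π := by positivity
  rw [div_le_iff₀ hpi]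
  calc (∫ θ in (0:ℝ)..(2 * π), ‖h ((r:ℂ) * Complex.exp (θ * Complex.I))‖ ^ 2)
      ≤ (2 * π) * (h 0).re ^ 2 + (2 * π) * (9 * π ^ 2 / 2) := hle.trans hsplit.le
    _ = (9 * π ^ 2 / 2 + (h 0).re ^ 2) * (2 * π) := by ring
end

section
/- Let F be a p×p matrix Carathéodory function on the unit disc (analytic, F(0)=1, Re F(z) > 0), and let f(z) := z^{-1}(F(z)-1)(F(z)+1)^{-1} be its Schur transform. Then for all |z| < 1: Re F(z) = (1 - z̄·f(z)†)^{-1}·(1 - |z|²·f(z)†·f(z))·(1 - z·f(z))^{-1}. -/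
open Matrix
open scoped ComplexOrder

attribute [local instance] Matrix.normedAddCommGroup Matrix.normedSpace

/-- For a matrix Carathéodory function `F` on the unit disc (analytic, `F(0) = 1`,
`Re F > 0`) with Schur transform `f(z) = z⁻¹ (F(z)-1)(F(z)+1)⁻¹`, one has
`Re F(z) = (1 - z̄ f(z)†)⁻¹ (1 - |z|² f(z)† f(z)) (1 - z f(z))⁻¹`. -/
theorem caratheodory_real_part_formula (p : ℕ)
    (F : ℂ → Matrix (Fin p) (Fin p) ℂ)
    (hF : AnalyticOnNhd ℂ F (Metric.ball 0 1))
    (hF0 : F 0 = 1)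
    (hpos : ∀ z ∈ Metric.ball (0:ℂ) 1, ((2 : ℂ)⁻¹ • (F z + (F z)ᴴ)).PosDef) :
    ∀ z ∈ Metric.ball (0:ℂ) 1,
      (2 : ℂ)⁻¹ • (F z + (F z)ᴴ)
        = (1 - (starRingEnd ℂ) z • (z⁻¹ • ((F z - 1) * (F z + 1)⁻¹))ᴴ)⁻¹
            * (1 - (Complex.normSq z : ℂ) •
                ((z⁻¹ • ((F z - 1) * (F z + 1)⁻¹))ᴴ * (z⁻¹ • ((F z - 1) * (F z + 1)⁻¹))))
            * (1 - z • (z⁻¹ • ((F z - 1) * (F z + 1)⁻¹)))⁻¹ := by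
  intro z hz
  set A := F z with hA
  have hpd := hpos z hz
  by_cases hz0 : z = 0
  · subst hz0
    have hone : (1 : Matrix (Fin p) (Fin p) ℂ)⁻¹ = 1 :=
      Matrix.inv_eq_right_inv (by simp)
    simp only [hA.symm ▸ hF0, Matrix.conjTranspose_one, _root_.inv_zero, zero_smul,
      smul_zero, map_zero, Complex.normSq_zero, Complex.ofReal_zero, sub_zero,
      hone, Matrix.mul_one, Matrix.one_mul]
    rw [show (1 + 1 : Matrix (Fin p) (Fin p) ℂ) = (2:ℂ) • 1 by module, smul_smul]
    norm_num
  · -- A + 1 is invertible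
    have hdet : IsUnit (A + 1).det := by
      rw [isUnit_iff_ne_zero]
      intro h
      obtain ⟨v, hv0, hv⟩ := (Matrix.exists_mulVec_eq_zero_iff).mpr h
      rw [Matrix.add_mulVec, Matrix.one_mulVec] at hv
      have hAv : A *ᵥ v = -v := eq_neg_of_add_eq_zero_left hv
      have hpos' := hpd.dotProduct_mulVec_pos hv0
      have hAHv : star v ⬝ᵥ (Aᴴ *ᵥ v) = -(star v ⬝ᵥ v) := by
        rw [Matrix.dotProduct_mulVec, ← Matrix.star_mulVec, hAv]
        simp
      rw [Matrix.smul_mulVec, Matrix.add_mulVec, dotProduct_smul,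
        dotProduct_add, hAv, hAHv, dotProduct_neg] at hpos'
      have hnn := dotProduct_star_self_nonneg v
      have h3 : (0:ℂ) < (2:ℂ)⁻¹ * (-(star v ⬝ᵥ v) + -(star v ⬝ᵥ v)) := by
        simpa [smul_eq_mul] using hpos'
      have h4 : (2:ℂ)⁻¹ * (-(star v ⬝ᵥ v) + -(star v ⬝ᵥ v)) = -(star v ⬝ᵥ v) := by
        ring
      have h2 : star v ⬝ᵥ v < 0 := neg_pos.mp (h4 ▸ h3)
      exact lt_irrefl _ (lt_of_le_of_lt hnn h2)
    -- scalar clean-up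
    have hzs : star z ≠ 0 := by simpa using hz0
    have hg1 : z • (z⁻¹ • ((A - 1) * (A + 1)⁻¹)) = (A - 1) * (A + 1)⁻¹ := by
      rw [smul_smul, mul_inv_cancel₀ hz0, one_smul]
    have hg2 : (starRingEnd ℂ) z • (z⁻¹ • ((A - 1) * (A + 1)⁻¹))ᴴ
        = ((A - 1) * (A + 1)⁻¹)ᴴ := by
      rw [Matrix.conjTranspose_smul, smul_smul]
      simp only [star_inv₀, starRingEnd_apply]
      rw [mul_inv_cancel₀ hzs, one_smul]
    have hg3 : (Complex.normSq z : ℂ) •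
        ((z⁻¹ • ((A - 1) * (A + 1)⁻¹))ᴴ * (z⁻¹ • ((A - 1) * (A + 1)⁻¹)))
        = ((A - 1) * (A + 1)⁻¹)ᴴ * ((A - 1) * (A + 1)⁻¹) := by
      rw [Matrix.conjTranspose_smul, Matrix.smul_mul, Matrix.mul_smul,
        smul_smul, smul_smul]
      simp only [star_inv₀, starRingEnd_apply]
      rw [Complex.normSq_eq_conj_mul_self, starRingEnd_apply]
      rw [show (star z * z * (star z)⁻¹ * z⁻¹ : ℂ) = (star z * (star z)⁻¹) * (z * z⁻¹) by ring,
        mul_inv_cancel₀ hzs, mul_inv_cancel₀ hz0, one_mul, one_smul]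
    rw [hg1, hg2, hg3]
    set g := (A - 1) * (A + 1)⁻¹ with hgdef
    have hdetH : IsUnit ((A + 1)ᴴ).det := by
      rw [Matrix.det_conjTranspose]; exact hdet.star
    have hgB : g * (A + 1) = A - 1 := by
      rw [hgdef, Matrix.nonsing_inv_mul_cancel_right _ _ hdet]
    have hgH : gᴴ = ((A + 1)ᴴ)⁻¹ * (Aᴴ - 1) := by
      rw [hgdef, Matrix.conjTranspose_mul, Matrix.conjTranspose_nonsing_inv,
        Matrix.conjTranspose_sub, Matrix.conjTranspose_one]
    have hBgH : (A + 1)ᴴ * gᴴ = Aᴴ - 1 := by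
      rw [hgH, Matrix.mul_nonsing_inv_cancel_left _ _ hdetH]
    have hinv1 : (1 - g)⁻¹ = (2:ℂ)⁻¹ • (A + 1) := by
      apply Matrix.inv_eq_right_inv
      rw [Matrix.mul_smul, Matrix.sub_mul, Matrix.one_mul, hgB]
      have h21 : (A + 1) - (A - 1) = (2:ℂ) • (1 : Matrix (Fin p) (Fin p) ℂ) := by
        module
      rw [h21, smul_smul]
      norm_num
    have hinv2 : (1 - gᴴ)⁻¹ = (2:ℂ)⁻¹ • (A + 1)ᴴ := by
      apply Matrix.inv_eq_left_inv
      rw [Matrix.smul_mul, Matrix.mul_sub, Matrix.mul_one, hBgH]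
      have h21 : (A + 1)ᴴ - (Aᴴ - 1) = (2:ℂ) • (1 : Matrix (Fin p) (Fin p) ℂ) := by
        rw [Matrix.conjTranspose_add, Matrix.conjTranspose_one]
        module
      rw [h21, smul_smul]
      norm_num
    rw [hinv1, hinv2]
    have key : (A + 1)ᴴ * (1 - gᴴ * g) * (A + 1) = (2:ℂ) • (A + Aᴴ) := by
      have e1 : (A + 1)ᴴ * (1 - gᴴ * g) * (A + 1)
          = (A + 1)ᴴ * (A + 1) - (Aᴴ - 1) * (A - 1) := by
        rw [Matrix.mul_sub, Matrix.mul_one, Matrix.sub_mul,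
          ← Matrix.mul_assoc ((A+1)ᴴ) gᴴ g, hBgH, Matrix.mul_assoc (Aᴴ - 1) g, hgB]
      rw [e1, Matrix.conjTranspose_add, Matrix.conjTranspose_one]
      simp only [Matrix.add_mul, Matrix.mul_add, Matrix.sub_mul, Matrix.mul_sub,
        Matrix.one_mul, Matrix.mul_one]
      module
    calc (2:ℂ)⁻¹ • (A + Aᴴ)
        = (2:ℂ)⁻¹ • ((2:ℂ)⁻¹ • ((2:ℂ) • (A + Aᴴ))) := by
          rw [smul_smul, smul_smul]; norm_num
      _ = (2:ℂ)⁻¹ • (A + 1)ᴴ * (1 - gᴴ * g) * ((2:ℂ)⁻¹ • (A + 1)) := by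
          rw [← key]
          rw [Matrix.smul_mul, Matrix.smul_mul, Matrix.mul_smul]
end
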